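/- Let n ≥ 2 be an integer and let μ > 0 be a real number. Then p_0(n+μ) < p_Fuj(μ) = 1 + 2/μ if and only if μ < M(n), where M(n) = ((n−1)/2)·(1 + √((n+7)/(n−1))). Equivalently, p_0(n+μ) < 1 + 2/μ if and only if μ² − (n−1)μ − 2(n−1) < 0. -/

import Mathlib

open Real

/-- Strauss exponent: positive root of `(N-1)p² - (N+1)p - 2 = 0`. -/
noncomputable def p0 (N : ℝ) : ℝ := (N + 1 + Real.sqrt (N ^ 2 + 10 * N - 7)) / (2 * (N - 1))

/-- Fujita exponent. -/
noncomputable def pFuj (N : ℝ) : ℝ := 1 + 2 / N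

/-- The constant `M(n) = ((n-1)/2)(1 + √((n+7)/(n-1)))`. -/
noncomputable def Mconst (n : ℝ) : ℝ := ((n - 1) / 2) * (1 + Real.sqrt ((n + 7) / (n - 1)))

lemma quad_iff (n : ℝ) (hn : 2 ≤ n) (μ : ℝ) (hμ : 0 < μ) :
    μ ^ 2 - (n - 1) * μ - 2 * (n - 1) < 0 ↔ μ < Mconst n := by
  have hn1 : (0:ℝ) < n - 1 := by linarith
  set s := Real.sqrt ((n + 7) / (n - 1)) with hs
  have hs0 : 0 ≤ s := Real.sqrt_nonneg _
  have hss : s ^ 2 = (n + 7) / (n - 1) := Real.sq_sqrt (by positivity)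
  have hss' : s ^ 2 * (n - 1) = n + 7 := by
    rw [hss]; field_simp
  have hs1 : 1 < s := by
    rw [hs]
    have : (1:ℝ) < (n + 7) / (n - 1) := by
      rw [lt_div_iff₀ hn1]; linarith
    nlinarith [Real.sq_sqrt (le_of_lt (lt_trans one_pos this)),
      Real.sqrt_nonneg ((n + 7) / (n - 1))]
  have hM : Mconst n = (n - 1) / 2 * (1 + s) := rfl
  constructor
  · intro h
    nlinarith [sq_nonneg (μ - (n - 1) / 2 * (1 + s))]
  · intro h
    have h2 : 0 < μ - (n - 1) / 2 * (1 - s) := by nlinarith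
    nlinarith [mul_pos (sub_pos.mpr h) h2]

lemma main_iff (n : ℝ) (hn : 2 ≤ n) (μ : ℝ) (hμ : 0 < μ) :
    p0 (n + μ) < 1 + 2 / μ ↔ μ ^ 2 - (n - 1) * μ - 2 * (n - 1) < 0 := by
  set N := n + μ with hN
  have hN1 : (0:ℝ) < N - 1 := by simp [hN]; linarith
  set R := μ * (N - 3) + 4 * (N - 1) with hR
  set c := (1 + 2 / μ) * (2 * (N - 1)) - (N + 1) with hc
  have hRpos : 0 < R := by simp only [hR, hN]; nlinarith
  have hcμ : c * μ = R := by
    simp only [hc, hR]; field_simp; ring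
  have hcpos : 0 < c := by
    by_contra hle
    push_neg at hle
    nlinarith
  have step1 : p0 N < 1 + 2 / μ ↔ Real.sqrt (N ^ 2 + 10 * N - 7) < c := by
    unfold p0
    rw [div_lt_iff₀ (by linarith),
      show (1 + 2 / μ) * (2 * (N - 1)) = c + (N + 1) by rw [hc]; ring]
    constructor <;> intro h <;> linarith
  have hsq : c ^ 2 * μ ^ 2 = R ^ 2 := by nlinarith [hcμ]
  have hSmul : (N ^ 2 + 10 * N - 7) * μ ^ 2 < R ^ 2 ↔ N ^ 2 + 10 * N - 7 < c ^ 2 := by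
    rw [← hsq]
    exact mul_lt_mul_iff_of_pos_right (pow_pos hμ 2)
  rw [step1, Real.sqrt_lt' hcpos, ← hSmul]
  have key : R ^ 2 - (N ^ 2 + 10 * N - 7) * μ ^ 2 =
      8 * (μ + n - 1) * (-(μ ^ 2 - (n - 1) * μ - 2 * (n - 1))) := by
    simp only [hR, hN]; ring
  constructor
  · intro h
    by_contra hge
    push_neg at hge
    nlinarith [mul_nonneg (by linarith : (0:ℝ) ≤ μ + n - 1) hge]
  · intro h
    nlinarith [mul_pos (by linarith : (0:ℝ) < μ + n - 1)
      (by linarith : 0 < -(μ ^ 2 - (n - 1) * μ - 2 * (n - 1)))]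

/-- `p_0(n+μ) < p_Fuj(μ)` if and only if `μ < M(n)`; equivalently,
`p_0(n+μ) < 1 + 2/μ` iff `μ² - (n-1)μ - 2(n-1) < 0`. -/
theorem strauss_lt_fujita_iff (n : ℕ) (hn : 2 ≤ n) (μ : ℝ) (hμ : 0 < μ) :
    (p0 ((n : ℝ) + μ) < pFuj μ ↔ μ < Mconst n) ∧
    (p0 ((n : ℝ) + μ) < 1 + 2 / μ ↔
      μ ^ 2 - ((n : ℝ) - 1) * μ - 2 * ((n : ℝ) - 1) < 0) := by
  have hn' : (2:ℝ) ≤ (n:ℝ) := by exact_mod_cast hn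
  have h1 := main_iff (n:ℝ) hn' μ hμ
  have h2 := quad_iff (n:ℝ) hn' μ hμ
  exact ⟨by rw [pFuj]; rw [h1]; exact h2, h1⟩
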